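/- Let f be an FIF on SG with uniform vertical scaling factor d, where d ≠ 3/5, and let (i,j,k) be a permutation of (1,2,3). Then for every nonnegative integer m, f(P_i^m(q_j)) + f(P_i^m(q_k)) = 2f(q_i) + d^m·Δ₀f(q_i) + ((Δ₁ⁱf(q_i) − d·Δ₀f(q_i))/(3/5 − d))·((3/5)^m − d^m), where P_i^m denotes the m-fold iterate of P_i, Δ₀f(q_i) = f(q_j) + f(q_k) − 2f(q_i), and Δ₁ⁱf(q_i) = f(P_i(q_j)) + f(P_i(q_k)) − 2f(q_i). -/
import Mathlib


open Finset Filter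

noncomputable section

/-- Points in the plane. -/
abbrev Pt := Fin 2 → ℝ

/-- The three contraction maps `P_i(x) = (x + q_i)/2`. -/
def Pmap (q : Fin 3 → Pt) (i : Fin 3) (x : Pt) : Pt := (x + q i) / 2

/-- `Pw q m ω = P_{ω 0} ∘ P_{ω 1} ∘ ⋯ ∘ P_{ω (m-1)}` for a word `ω` of length `m`. -/
def Pw (q : Fin 3 → Pt) : (m : ℕ) → (Fin m → Fin 3) → Pt → Pt
  | 0, _, x => x
  | m + 1, ω, x => Pmap q (ω 0) (Pw q m (fun k => ω k.succ) x)

/-- The level-`m` vertex set `V_m`. -/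
def V (q : Fin 3 → Pt) (m : ℕ) : Set Pt :=
  {x | ∃ ω : Fin m → Fin 3, ∃ i : Fin 3, x = Pw q m ω (q i)}

/-- `V_* = ⋃ m, V_m`. -/
def Vstar (q : Fin 3 → Pt) : Set Pt := ⋃ m, V q m

/-- The Sierpinski gasket, as the closure of `V_*`. -/
def SG (q : Fin 3 → Pt) : Set Pt := closure (Vstar q)

/-- The level-`m` graph energy. -/
def energy (q : Fin 3 → Pt) (m : ℕ) (u : Pt → ℝ) : ℝ :=
  (5/3 : ℝ)^m * ∑ ω : Fin m → Fin 3,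
    ∑ p ∈ Finset.univ.filter (fun p : Fin 3 × Fin 3 => p.1 < p.2),
      (u (Pw q m ω (q p.1)) - u (Pw q m ω (q p.2)))^2

/-- The level-`m` bilinear graph energy. -/
def energyBil (q : Fin 3 → Pt) (m : ℕ) (u v : Pt → ℝ) : ℝ :=
  (5/3 : ℝ)^m * ∑ ω : Fin m → Fin 3,
    ∑ p ∈ Finset.univ.filter (fun p : Fin 3 × Fin 3 => p.1 < p.2),
      (u (Pw q m ω (q p.1)) - u (Pw q m ω (q p.2))) *
        (v (Pw q m ω (q p.1)) - v (Pw q m ω (q p.2)))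

open scoped Classical in
/-- The level-`m` graph Laplacian at `x`. -/
def graphLap (q : Fin 3 → Pt) (m : ℕ) (u : Pt → ℝ) (x : Pt) : ℝ :=
  ∑ ω : Fin m → Fin 3,
    ∑ p ∈ Finset.univ.filter (fun p : Fin 3 × Fin 3 => p.1 ≠ p.2 ∧ Pw q m ω (q p.1) = x),
      (u (Pw q m ω (q p.2)) - u x)

/-- A function is harmonic on `SG` if it is continuous on `SG` and satisfies
the `1/5-2/5` rule. -/
def IsHarmonic (q : Fin 3 → Pt) (h : Pt → ℝ) : Prop :=
  ContinuousOn h (SG q) ∧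
  ∀ (m : ℕ) (ω : Fin m → Fin 3) (i j k : Fin 3), i ≠ j → j ≠ k → i ≠ k →
    h (Pw q m ω (Pmap q i (q j))) =
      2/5 * h (Pw q m ω (q i)) + 2/5 * h (Pw q m ω (q j)) + 1/5 * h (Pw q m ω (q k))

/-- `f` is a fractal interpolation function on `SG` with vertical scaling factors `d i`. -/
def IsFIF (q : Fin 3 → Pt) (d : Fin 3 → ℝ) (f : Pt → ℝ) : Prop :=
  ContinuousOn f (SG q) ∧
  ∃ h : Fin 3 → Pt → ℝ, (∀ i, IsHarmonic q (h i)) ∧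
    ∀ i, ∀ x ∈ SG q, f (Pmap q i x) = d i * f x + h i x


lemma Pmap_fixed (q : Fin 3 → Pt) (i : Fin 3) : Pmap q i (q i) = q i := by
  funext t; simp [Pmap]

lemma Pw_const (q : Fin 3 → Pt) (i : Fin 3) :
    ∀ (m : ℕ) (x : Pt), Pw q m (fun _ => i) x = (Pmap q i)^[m] x := by
  intro m
  induction m with
  | zero => intro x; rfl
  | succ n ih =>
    intro x
    rw [Function.iterate_succ_apply']
    show Pmap q i (Pw q n (fun _ => i) x) = _
    rw [ih]

lemma iter_mem_SG (q : Fin 3 → Pt) (i j : Fin 3) (m : ℕ) :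
    (Pmap q i)^[m] (q j) ∈ SG q := by
  apply subset_closure
  exact Set.mem_iUnion.2 ⟨m, ⟨fun _ => i, j, (Pw_const q i m (q j)).symm⟩⟩

/-- for an FIF with uniform vertical scaling factor `d ≠ 3/5`,
`f(q_{i^m j}) + f(q_{i^m k})
  = 2f(q_i) + d^m Δ₀f(q_i) + (Δ₁ⁱf(q_i) - dΔ₀f(q_i))/(3/5-d) ((3/5)^m - d^m)`. -/
theorem stmt_7 (q : Fin 3 → Pt) (hq : AffineIndependent ℝ q)
    (d : ℝ) (hd : d ∈ Set.Ioo (-1 : ℝ) 1) (hd3 : d ≠ 3/5)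
    (f : Pt → ℝ) (hf : IsFIF q (fun _ => d) f)
    (i j k : Fin 3) (hij : i ≠ j) (hjk : j ≠ k) (hik : i ≠ k) (m : ℕ) :
    f ((Pmap q i)^[m] (q j)) + f ((Pmap q i)^[m] (q k)) =
      2 * f (q i) + d^m * (f (q j) + f (q k) - 2 * f (q i)) +
        ((f (Pmap q i (q j)) + f (Pmap q i (q k)) - 2 * f (q i))
            - d * (f (q j) + f (q k) - 2 * f (q i))) / (3/5 - d)
          * ((3/5 : ℝ)^m - d^m) := by
  obtain ⟨-, h, hh, hfif⟩ := hf
  have hne : (3/5 : ℝ) - d ≠ 0 := sub_ne_zero_of_ne (Ne.symm hd3)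
  -- the FIF relation at the iterates
  have hrec : ∀ (l : Fin 3) (m : ℕ),
      f ((Pmap q i)^[m+1] (q l)) = d * f ((Pmap q i)^[m] (q l)) + h i ((Pmap q i)^[m] (q l)) := by
    intro l m
    rw [Function.iterate_succ_apply']
    exact hfif i _ (iter_mem_SG q i l m)
  -- the harmonic function value at q i
  have hqi : h i (q i) = f (q i) - d * f (q i) := by
    have := hfif i (q i) (iter_mem_SG q i i 0)
    rw [Pmap_fixed] at this
    linarith
  -- closed form for the harmonic sums
  have hT : ∀ m : ℕ,
      h i ((Pmap q i)^[m] (q j)) + h i ((Pmap q i)^[m] (q k)) =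
        (3/5 : ℝ)^m * (h i (q j) + h i (q k) - 2 * h i (q i)) + 2 * h i (q i) := by
    intro m
    induction m with
    | zero => simp
    | succ n ih =>
      have e1 := (hh i).2 n (fun _ => i) i j k hij hjk hik
      have e2 := (hh i).2 n (fun _ => i) i k j hik (Ne.symm hjk) hij
      rw [Pw_const, Pw_const, Pw_const, Pw_const, Function.iterate_fixed (Pmap_fixed q i)]
        at e1 e2
      rw [← Function.iterate_succ_apply] at e1 e2
      rw [e1, e2, pow_succ]
      linarith [ih]
  -- main induction
  induction m with
  | zero => simp
  | succ n ih =>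
    have hAj := hrec j n
    have hAk := hrec k n
    have hTn := hT n
    -- express h i (q j), h i (q k) via f
    have hj' : h i (q j) = f (Pmap q i (q j)) - d * f (q j) := by
      have := hfif i (q j) (iter_mem_SG q i j 0); linarith
    have hk' : h i (q k) = f (Pmap q i (q k)) - d * f (q k) := by
      have := hfif i (q k) (iter_mem_SG q i k 0); linarith
    rw [hj', hk', hqi] at hTn
    have step : f ((Pmap q i)^[n+1] (q j)) + f ((Pmap q i)^[n+1] (q k)) =
        d * (f ((Pmap q i)^[n] (q j)) + f ((Pmap q i)^[n] (q k))) +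
          (3/5 : ℝ)^n * (f (Pmap q i (q j)) - d * f (q j) + (f (Pmap q i (q k)) - d * f (q k))
            - 2 * (f (q i) - d * f (q i))) + 2 * (f (q i) - d * f (q i)) := by
      linear_combination hAj + hAk + hTn
    rw [step, ih]
    have hC := div_mul_cancel₀ (f (Pmap q i (q j)) + f (Pmap q i (q k)) - 2 * f (q i)
        - d * (f (q j) + f (q k) - 2 * f (q i))) hne
    linear_combination (-(3/5 : ℝ)^n) * hC

end
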